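/- The function u(z) = log( (1−|a|²) / |1 − conj(a)z|² ) on the closed unit disc satisfies the boundary condition ∂u/∂ν + 1 = e^{u} on the unit circle, where ν is the outward unit normal (radial derivative). -/

import Mathlib

/-- The function `u(z) = log((1−|a|²)/|1−conj(a)z|²)` satisfies the boundary
condition `∂u/∂ν + 1 = e^u` on the unit circle, where `∂u/∂ν` is the radial
derivative. -/
theorem extremal_log_boundary_condition (a : ℂ) (ha : ‖a‖ < 1) :
    ∀ z : ℂ, ‖z‖ = 1 →
      deriv (fun r : ℝ =>
          Real.log ((1 - ‖a‖ ^ 2) /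
            ‖1 - (starRingEnd ℂ) a * ((r : ℂ) * z)‖ ^ 2)) 1 + 1 =
        Real.exp (Real.log ((1 - ‖a‖ ^ 2) /
          ‖1 - (starRingEnd ℂ) a * z‖ ^ 2)) := by
  intro z hz
  set c : ℂ := (starRingEnd ℂ) a * z with hc
  have hfun : ∀ r : ℝ, (starRingEnd ℂ) a * ((r : ℂ) * z) = c * (r : ℂ) := by
    intro r; rw [hc]; ring
  have habsc : ‖c‖ = ‖a‖ := by
    simp [hc, map_mul, hz]
  have hclt : ‖c‖ < 1 := by rw [habsc]; exact ha
  have hA : (0:ℝ) < 1 - ‖a‖ ^ 2 := by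
    nlinarith [norm_nonneg a]
  set A : ℝ := 1 - ‖a‖ ^ 2 with hAdef
  set q : ℝ → ℝ := fun r => 1 - 2 * c.re * r + Complex.normSq c * r ^ 2 with hqdef
  have hqe : ∀ r : ℝ, ‖1 - c * (r : ℂ)‖ ^ 2 = q r := by
    intro r
    rw [Complex.sq_norm, Complex.normSq_apply]
    simp [hqdef, Complex.normSq_apply]
    ring
  have h1c : (1 : ℂ) - c ≠ 0 := by
    intro h
    have hc1 : c = 1 := by linear_combination -h
    rw [hc1] at hclt
    simp at hclt
  have hq1 : 0 < q 1 := by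
    rw [← hqe 1]
    have : ‖1 - c * ((1:ℝ):ℂ)‖ ≠ 0 := by
      simpa using norm_ne_zero_iff.mpr h1c
    positivity
  have hnsq : Complex.normSq c = ‖a‖ ^ 2 := by
    rw [← habsc, ← Complex.sq_norm]
  have hqd : HasDerivAt q (-(2 * c.re) + Complex.normSq c * 2) 1 := by
    have h1 : HasDerivAt (fun r : ℝ => r) 1 1 := hasDerivAt_id 1
    have h2 : HasDerivAt (fun r : ℝ => r ^ 2) 2 1 := by
      simpa using (hasDerivAt_pow 2 (1:ℝ))
    have := ((h1.const_mul (2 * c.re)).const_sub 1).add (h2.const_mul (Complex.normSq c))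
    simpa [hqdef, mul_one, Pi.add_def] using this
  have hd : HasDerivAt (fun r : ℝ => Real.log A - Real.log (q r))
      (-((-(2 * c.re) + Complex.normSq c * 2) / q 1)) 1 :=
    (hqd.log hq1.ne').const_sub (Real.log A)
  have hcont : ContinuousAt q 1 := hqd.continuousAt
  have hev : ∀ᶠ r in nhds (1:ℝ), 0 < q r :=
    hcont.eventually (eventually_gt_nhds hq1)
  have heq : (fun r : ℝ => Real.log (A / ‖1 - (starRingEnd ℂ) a * ((r : ℂ) * z)‖ ^ 2))
      =ᶠ[nhds 1] fun r : ℝ => Real.log A - Real.log (q r) := by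
    filter_upwards [hev] with r hr
    rw [hfun r, hqe r, Real.log_div hA.ne' hr.ne']
  have hderiv : deriv (fun r : ℝ =>
      Real.log (A / ‖1 - (starRingEnd ℂ) a * ((r : ℂ) * z)‖ ^ 2)) 1
      = -((-(2 * c.re) + Complex.normSq c * 2) / q 1) := by
    rw [heq.deriv_eq, hd.deriv]
  rw [hderiv]
  have hq1e' : ‖1 - c‖ ^ 2 = q 1 := by simpa using hqe 1
  rw [hq1e']
  rw [Real.exp_log (div_pos hA hq1)]
  have hq1e : q 1 = 1 - 2 * c.re + Complex.normSq c := by simp [hqdef]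
  rw [hAdef, ← hnsq]
  field_simp
  rw [hq1e]
  ring
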